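/- Let λ₀ < λ₁ < ... < λ_{J−1} be real numbers. Let X be a finite index set, with coefficients c_x > 0 and sign patterns ξ_{x,j} ∈ {+1, −1} (for x ∈ X, j ∈ {0, ..., J−1}) such that λ_j = ∑_{x} c_x·ξ_{x,j} for all j. Suppose that for all m < n the saturation condition ∑_x c_x·(1 − ξ_{x,m}·ξ_{x,n}) = λ_n − λ_m holds. Then for every x ∈ X, the sequence j ↦ ξ_{x,j} is monotone non-decreasing (i.e. there is a threshold t_x with ξ_{x,j} = −1 for j < t_x and ξ_{x,j} = +1 for j ≥ t_x). -/

import Mathlib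

/-- Uniqueness part of **Lemma 4**: let `λ₀ < λ₁ < ... < λ_{J−1}` be real numbers,
`c_x > 0` coefficients and `ξ_{x,j} ∈ {±1}` sign patterns with `λ_j = ∑_x c_x ξ_{x,j}`.
If the saturation condition `∑_x c_x (1 − ξ_{x,m} ξ_{x,n}) = λ_n − λ_m` holds for all
`m < n < J`, then every sequence `j ↦ ξ_{x,j}` is monotone non-decreasing on
`{0, ..., J−1}` (i.e. each `ξ_x` is a threshold/step pattern). -/
theorem stmt_17 {ι : Type*} [Fintype ι] (J : ℕ)
    (lam : ℕ → ℝ) (hlam : ∀ j, j + 1 < J → lam j < lam (j + 1))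
    (c : ι → ℝ) (hc : ∀ x, 0 < c x)
    (ξ : ι → ℕ → ℝ) (hξ : ∀ x, ∀ j < J, ξ x j = 1 ∨ ξ x j = -1)
    (hrep : ∀ j < J, lam j = ∑ x, c x * ξ x j)
    (hsat : ∀ m n, m < n → n < J → ∑ x, c x * (1 - ξ x m * ξ x n) = lam n - lam m) :
    ∀ x, ∀ m n, m ≤ n → n < J → ξ x m ≤ ξ x n := by
  intro x m n hmn hnJ
  rcases eq_or_lt_of_le hmn with rfl | hlt
  · exact le_refl _
  have hmJ : m < J := hlt.trans hnJ
  -- sum of nonnegative terms equal to zero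
  have hsum : ∑ y, c y * ((1 + ξ y m) * (1 - ξ y n)) = 0 := by
    have h1 := hsat m n hlt hnJ
    have h2 := hrep m hmJ
    have h3 := hrep n hnJ
    have expand : ∀ y : ι, c y * ((1 + ξ y m) * (1 - ξ y n))
        = c y * (1 - ξ y m * ξ y n) + c y * ξ y m - c y * ξ y n := by
      intro y; ring
    rw [Finset.sum_congr rfl (fun y _ => expand y)]
    rw [Finset.sum_sub_distrib, Finset.sum_add_distrib, h1, ← h2, ← h3]
    ring
  have hnonneg : ∀ y : ι, 0 ≤ c y * ((1 + ξ y m) * (1 - ξ y n)) := by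
    intro y
    apply mul_nonneg (hc y).le
    rcases hξ y m hmJ with h | h <;> rcases hξ y n hnJ with h' | h' <;>
      rw [h, h'] <;> norm_num
  have hzero : c x * ((1 + ξ x m) * (1 - ξ x n)) = 0 := by
    have := (Finset.sum_eq_zero_iff_of_nonneg (fun y _ => hnonneg y)).mp hsum
    exact this x (Finset.mem_univ x)
  have h4 : (1 + ξ x m) * (1 - ξ x n) = 0 := by
    rcases mul_eq_zero.mp hzero with h | h
    · exact absurd h (hc x).ne'
    · exact h
  rcases hξ x m hmJ with h | h <;> rcases hξ x n hnJ with h' | h' <;>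
    rw [h, h'] <;> rw [h, h'] at h4 <;> linarith
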